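/- Let V be a nonempty finite set, f : V → V → ℝ symmetric (f i j = f j i), and b : V → ℝ. For i ∈ V and M ⊆ V define μ_i(M) = ∏_{j ∈ M \ {i}} f i j, W(M) = Σ_{i ∈ M} μ_i(M) · b_i, and Π(M) = exp(W(M)) / Z with Z = Σ_{M' ⊆ V} exp(W(M')). For i ∈ V and M ⊆ V let p_i(M) = exp(w_i¹) / ( exp( Σ_{j ∈ M \ {i}} (w_j⁰ − w_j¹) ) + exp(w_i¹) ), where w_j⁰ = b_j · μ_j(M \ {i}), w_j¹ = w_j⁰ · f i j, and w_i¹ = b_i · μ_i(M ∪ {i}). Define the single-site Glauber transition kernel on subsets of V by K(M, M') = (1/|V|) · Σ_{i ∈ V : M' \ {i} = M \ {i}} q_i(M, M'), where q_i(M, M') = p_i(M) if i ∈ M' and q_i(M, M') = 1 − p_i(M) if i ∉ M'. Then Π is a stationary distribution of this kernel: for every M' ⊆ V, Σ_{M ⊆ V} Π(M) · K(M, M') = Π(M'). -/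

import Mathlib

open Finset Real

/-- Lemma 1 of the paper: for fixed queue lengths, the Spatial CSMA single-site update
is a Glauber dynamics whose stationary distribution is the Gibbs measure
`Π(M) = exp(W M) / Z` with `W M = ∑_{i ∈ M} μ i M * b i`, `μ i M = ∏_{j ∈ M \ {i}} f i j`. -/
theorem spatialCSMA_glauber_stationary
    {V : Type*} [Fintype V] [DecidableEq V] [Nonempty V]
    (f : V → V → ℝ) (b : V → ℝ) (hf : ∀ i j, f i j = f j i)
    (μ : V → Finset V → ℝ) (hμ : ∀ k S, μ k S = ∏ j ∈ S.erase k, f k j)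
    (W : Finset V → ℝ) (hW : ∀ S, W S = ∑ k ∈ S, μ k S * b k)
    (Z : ℝ) (hZ : Z = ∑ S : Finset V, exp (W S))
    (Pi : Finset V → ℝ) (hPi : ∀ S, Pi S = exp (W S) / Z)
    (p : V → Finset V → ℝ)
    (hp : ∀ i M, p i M =
      exp (b i * μ i (insert i M)) /
        (exp (∑ j ∈ M.erase i,
            (b j * μ j (M.erase i) - b j * μ j (M.erase i) * f i j)) +
          exp (b i * μ i (insert i M))))
    (K : Finset V → Finset V → ℝ)
    (hK : ∀ M M', K M M' = (1 / (Fintype.card V : ℝ)) *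
      ∑ i ∈ Finset.univ.filter (fun i : V => M'.erase i = M.erase i),
        (if i ∈ M' then p i M else 1 - p i M)) :
    ∀ M' : Finset V, ∑ M : Finset V, Pi M * K M M' = Pi M' := by
  intro M'
  have hZpos : 0 < Z := by
    rw [hZ]
    exact Finset.sum_pos (fun S _ => exp_pos _) Finset.univ_nonempty
  have hn : (0 : ℝ) < (Fintype.card V : ℝ) := by
    exact_mod_cast Fintype.card_pos
  -- the key detailed-balance computation for a single flip
  have key : ∀ (i : V) (A : Finset V), i ∉ A →
      exp (W A) * p i A = exp (W (insert i A)) * (1 - p i (insert i A)) := by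
    intro i A hiA
    set w := b i * μ i (insert i A) with hw
    set d := ∑ j ∈ A, (b j * μ j A - b j * μ j A * f i j) with hd
    have hAer : A.erase i = A := Finset.erase_eq_of_notMem hiA
    have hIer : (insert i A).erase i = A := Finset.erase_insert hiA
    have hpA : p i A = exp w / (exp d + exp w) := by
      rw [hp, hAer]
    have hpI : p i (insert i A) = exp w / (exp d + exp w) := by
      rw [hp, hIer, Finset.insert_idem]
    have hden : 0 < exp d + exp w := by positivity
    have h1p : 1 - p i (insert i A) = exp d / (exp d + exp w) := by
      rw [hpI]; field_simp; ring
    rw [hpA, h1p]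
    have hWidentity : W A + w = W (insert i A) + d := by
      have hWI : W (insert i A) = μ i (insert i A) * b i + ∑ j ∈ A, (f i j * μ j A) * b j := by
        rw [hW, Finset.sum_insert hiA]
        congr 1
        refine Finset.sum_congr rfl fun j hj => ?_
        have hji : j ≠ i := fun h => hiA (h ▸ hj)
        have : μ j (insert i A) = f i j * μ j A := by
          rw [hμ, Finset.erase_insert_of_ne hji.symm,
            Finset.prod_insert (fun h => hiA (Finset.mem_of_mem_erase h)), hf j i, ← hμ]
        rw [this]
      have hsum : ∑ j ∈ A, (f i j * μ j A) * b j
          + ∑ j ∈ A, (b j * μ j A - b j * μ j A * f i j) = ∑ j ∈ A, μ j A * b j := by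
        rw [← Finset.sum_add_distrib]
        exact Finset.sum_congr rfl fun j _ => by ring
      rw [hWI, hW A, hd]
      linarith [hsum]
    have hexp : exp (W A) * exp w = exp (W (insert i A)) * exp d := by
      rw [← exp_add, ← exp_add, hWidentity]
    field_simp
    linarith [hexp]
  -- detailed balance in the form needed
  have db : ∀ (i : V) (M : Finset V), M'.erase i = M.erase i →
      exp (W M) * (if i ∈ M' then p i M else 1 - p i M)
        = exp (W M') * (if i ∈ M then p i M' else 1 - p i M') := by
    intro i M hMM'
    by_cases hM : i ∈ M <;> by_cases hM' : i ∈ M'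
    · have : M = M' := by
        rw [← Finset.insert_erase hM, ← Finset.insert_erase hM', hMM']
      simp [this, hM, hM']
    · have hM'eq : M' = M.erase i := by rw [← Finset.erase_eq_of_notMem hM', hMM']
      have hMeq : M = insert i M' := by rw [hM'eq, Finset.insert_erase hM]
      simp only [hM, hM', if_true, if_false]
      rw [hMeq]
      exact (key i M' hM').symm
    · have hMeq : M = M'.erase i := by rw [← Finset.erase_eq_of_notMem hM, ← hMM']
      have hM'eq : M' = insert i M := by rw [hMeq, Finset.insert_erase hM']
      simp only [hM, hM', if_true, if_false]
      rw [hM'eq]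
      exact key i M hM
    · have : M = M' := by
        rw [← Finset.erase_eq_of_notMem hM, ← Finset.erase_eq_of_notMem hM', hMM']
      simp [this, hM, hM']
  -- inner sum over the two states differing at site i equals 1
  have inner_one : ∀ i : V,
      (∑ M : Finset V, if M'.erase i = M.erase i then
        (if i ∈ M then p i M' else 1 - p i M') else 0) = 1 := by
    intro i
    set A := M'.erase i with hA
    have hiA : i ∉ A := Finset.notMem_erase i M'
    have hfilter : (Finset.univ.filter (fun M : Finset V => M'.erase i = M.erase i))
        = {A, insert i A} := by
      ext M
      simp only [Finset.mem_filter, Finset.mem_univ, true_and, Finset.mem_insert,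
        Finset.mem_singleton]
      constructor
      · intro h
        by_cases hiM : i ∈ M
        · right
          rw [← Finset.insert_erase hiM, ← h]
        · left
          rw [← Finset.erase_eq_of_notMem hiM, ← h]
      · rintro (rfl | rfl)
        · rw [Finset.erase_eq_of_notMem hiA]
        · rw [Finset.erase_insert hiA]
    have hne : A ≠ insert i A := fun h => hiA (h ▸ Finset.mem_insert_self i A)
    rw [← Finset.sum_filter, hfilter, Finset.sum_pair hne]
    rw [if_neg hiA, if_pos (Finset.mem_insert_self i A)]
    ring
  -- put everything together
  have main : ∑ M : Finset V, exp (W M) *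
      ∑ i ∈ Finset.univ.filter (fun i : V => M'.erase i = M.erase i),
        (if i ∈ M' then p i M else 1 - p i M)
      = (Fintype.card V : ℝ) * exp (W M') := by
    have step1 : ∀ M : Finset V, exp (W M) *
        (∑ i ∈ Finset.univ.filter (fun i : V => M'.erase i = M.erase i),
          (if i ∈ M' then p i M else 1 - p i M))
        = ∑ i : V, if M'.erase i = M.erase i then
            exp (W M') * (if i ∈ M then p i M' else 1 - p i M') else 0 := by
      intro M
      rw [Finset.mul_sum, Finset.sum_filter]
      refine Finset.sum_congr rfl fun i _ => ?_
      by_cases h : M'.erase i = M.erase i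
      · rw [if_pos h, if_pos h, db i M h]
      · rw [if_neg h, if_neg h]
    calc ∑ M : Finset V, exp (W M) *
          ∑ i ∈ Finset.univ.filter (fun i : V => M'.erase i = M.erase i),
            (if i ∈ M' then p i M else 1 - p i M)
        = ∑ M : Finset V, ∑ i : V, if M'.erase i = M.erase i then
            exp (W M') * (if i ∈ M then p i M' else 1 - p i M') else 0 := by
          exact Finset.sum_congr rfl fun M _ => step1 M
      _ = ∑ i : V, ∑ M : Finset V, if M'.erase i = M.erase i then
            exp (W M') * (if i ∈ M then p i M' else 1 - p i M') else 0 := by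
          exact Finset.sum_comm
      _ = ∑ i : V, exp (W M') * ∑ M : Finset V, (if M'.erase i = M.erase i then
            (if i ∈ M then p i M' else 1 - p i M') else 0) := by
          refine Finset.sum_congr rfl fun i _ => ?_
          rw [Finset.mul_sum]
          refine Finset.sum_congr rfl fun M _ => ?_
          by_cases h : M'.erase i = M.erase i
          · rw [if_pos h, if_pos h]
          · rw [if_neg h, if_neg h, mul_zero]
      _ = ∑ i : V, exp (W M') * 1 := by
          exact Finset.sum_congr rfl fun i _ => by rw [inner_one i]
      _ = (Fintype.card V : ℝ) * exp (W M') := by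
          simp [Finset.card_univ, mul_comm]
  have step : ∑ M : Finset V, Pi M * K M M'
      = (Z⁻¹ * (Fintype.card V : ℝ)⁻¹) *
        ∑ M : Finset V, exp (W M) *
          ∑ i ∈ Finset.univ.filter (fun i : V => M'.erase i = M.erase i),
            (if i ∈ M' then p i M else 1 - p i M) := by
    rw [Finset.mul_sum]
    refine Finset.sum_congr rfl fun M _ => ?_
    rw [hPi, hK]
    ring
  rw [step, main, hPi]
  field_simp
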